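/- Let q(dy|x,s) be a conservative stable Q-function on a Borel space S. Define recursively, for x ∈ S, 0 ≤ s ≤ t, Γ ∈ B(S): p^{(0)}(s,x,t,Γ) := δ_x(Γ) e^{−∫_s^t q_x(v) dv}, and p^{(n+1)}(s,x,t,Γ) := ∫_s^t e^{−∫_s^u q_x(v) dv} ∫_S p^{(n)}(u,z,t,Γ) q̃(dz|x,u) du. Then for every n ≥ 0, x ∈ S, s ≤ t: (i) p^{(n)}(s,x,t,Γ) ≥ 0; (ii) Σ_{k=0}^n p^{(k)}(s,x,t,S) ≤ 1; hence the Feller construction p_q(s,x,t,Γ) := Σ_{n=0}^∞ p^{(n)}(s,x,t,Γ) defines a substochastic kernel: p_q(s,x,t,S) ≤ 1. -/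

import Mathlib

open MeasureTheory
open scoped ENNReal
open Set Real

lemma sum_lintegral_le' {α : Type*} [MeasurableSpace α] (μ : Measure α)
    (n : ℕ) (g : ℕ → α → ℝ≥0∞) :
    ∑ k ∈ Finset.range n, ∫⁻ a, g k a ∂μ ≤ ∫⁻ a, ∑ k ∈ Finset.range n, g k a ∂μ := by
  induction n with
  | zero => simp
  | succ n ih =>
    calc ∑ k ∈ Finset.range (n+1), ∫⁻ a, g k a ∂μ
        = (∑ k ∈ Finset.range n, ∫⁻ a, g k a ∂μ) + ∫⁻ a, g n a ∂μ := Finset.sum_range_succ _ _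
      _ ≤ (∫⁻ a, ∑ k ∈ Finset.range n, g k a ∂μ) + ∫⁻ a, g n a ∂μ := add_le_add ih le_rfl
      _ ≤ ∫⁻ a, (∑ k ∈ Finset.range n, g k a) + g n a ∂μ := le_lintegral_add _ _
      _ = ∫⁻ a, ∑ k ∈ Finset.range (n+1), g k a ∂μ := by
          simp [Finset.sum_range_succ]

lemma key_ineq {f : ℝ → ℝ} {C : ℝ} (hf0 : ∀ u, 0 ≤ f u) (hfC : ∀ u, f u ≤ C)
    (hfm : Measurable f) {s t : ℝ} (hst : s ≤ t) :
    ∫⁻ u in Set.Ioc s t,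
        ENNReal.ofReal (Real.exp (-(∫ v in s..u, f v))) * ENNReal.ofReal (f u)
      ≤ ENNReal.ofReal (1 - Real.exp (-(∫ v in s..t, f v))) := by
  -- integrability of f on intervals
  have hintOn : ∀ A : Set ℝ, volume A ≠ ∞ → IntegrableOn f A := by
    intro A hA
    exact Measure.integrableOn_of_bounded hA hfm.aestronglyMeasurable
      (ae_of_all _ fun u => by
        rw [Real.norm_eq_abs, abs_of_nonneg (hf0 u)]; exact hfC u)
  have hint : ∀ a b : ℝ, IntervalIntegrable f volume a b := by
    intro a b
    rw [intervalIntegrable_iff]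
    exact hintOn _ measure_Ioc_lt_top.ne
  set F : ℝ → ℝ := fun u => ∫ v in s..u, f v with hF
  have hFc : Continuous F := intervalIntegral.continuous_primitive hint s
  have hFmono : Monotone F := by
    intro a b hab
    have h1 : F a + ∫ v in a..b, f v = F b :=
      intervalIntegral.integral_add_adjacent_intervals (hint s a) (hint a b)
    have h2 : 0 ≤ ∫ v in a..b, f v :=
      intervalIntegral.integral_nonneg hab fun u _ => hf0 u
    linarith
  have hFs : F s = 0 := intervalIntegral.integral_same
  have hF0 : ∀ u, s ≤ u → 0 ≤ F u := fun u hu => hFs ▸ hFmono hu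
  set M : ℝ := F t with hMdef
  have hM0 : 0 ≤ M := hF0 t hst
  -- lintegral of ofReal ∘ f over Ioc s c
  have hlint : ∀ c, s ≤ c → ∫⁻ u in Ioc s c, ENNReal.ofReal (f u) = ENNReal.ofReal (F c) := by
    intro c hc
    rw [← ofReal_integral_eq_lintegral_ofReal (hintOn _ (by simp)) (ae_of_all _ hf0)]
    congr 1
    rw [hF]
    exact (intervalIntegral.integral_of_le hc).symm
  -- step A : exponential as a lintegral
  have hexpInt : ∀ a : ℝ, IntegrableOn (fun y => Real.exp (-y)) (Ioi a) := by
    intro a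
    simpa using exp_neg_integrableOn_Ioi a one_pos
  have hA : ∀ a : ℝ, ENNReal.ofReal (Real.exp (-a))
      = ∫⁻ y in Ioi a, ENNReal.ofReal (Real.exp (-y)) := by
    intro a
    rw [← ofReal_integral_eq_lintegral_ofReal (hexpInt a)
      (ae_of_all _ fun y => (Real.exp_pos _).le), integral_exp_neg_Ioi]
  -- the double function
  set g : ℝ → ℝ → ℝ≥0∞ := fun u y =>
    (Ioi (F u)).indicator (fun y => ENNReal.ofReal (Real.exp (-y)) * ENNReal.ofReal (f u)) y
    with hg
  have hgm : AEMeasurable (Function.uncurry g)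
      ((volume.restrict (Ioc s t)).prod volume) := by
    have : Function.uncurry g = Set.indicator {p : ℝ × ℝ | F p.1 < p.2}
        (fun p => ENNReal.ofReal (Real.exp (-p.2)) * ENNReal.ofReal (f p.1)) := by
      funext p
      rcases p with ⟨u, y⟩
      simp only [Function.uncurry, hg, Set.indicator, mem_Ioi, mem_setOf_eq]
    rw [this]
    exact (Measurable.indicator
      ((ENNReal.measurable_ofReal.comp ((Real.continuous_exp.measurable.comp measurable_neg).comp
        measurable_snd)).mul (ENNReal.measurable_ofReal.comp (hfm.comp measurable_fst)))
      (measurableSet_lt (hFc.measurable.comp measurable_fst) measurable_snd)).aemeasurable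
  -- rewrite LHS
  have hLHS : ∫⁻ u in Set.Ioc s t,
      ENNReal.ofReal (Real.exp (-(∫ v in s..u, f v))) * ENNReal.ofReal (f u)
      = ∫⁻ u in Ioc s t, ∫⁻ y, g u y := by
    apply lintegral_congr
    intro u
    rw [show (∫ v in s..u, f v) = F u from rfl, hA (F u), hg]
    rw [lintegral_indicator measurableSet_Ioi,
      lintegral_mul_const' _ _ ENNReal.ofReal_ne_top]
  rw [hLHS]
  rw [lintegral_lintegral_swap hgm]
  -- inner bound
  set J : ℝ → ℝ≥0∞ := fun y =>
    ∫⁻ u in Ioc s t, ({u : ℝ | F u < y}).indicator (fun u => ENNReal.ofReal (f u)) u with hJ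
  have hg2 : ∀ y, (∫⁻ u in Ioc s t, g u y)
      = ENNReal.ofReal (Real.exp (-y)) * J y := by
    intro y
    rw [hJ, ← lintegral_const_mul' _ _ ENNReal.ofReal_ne_top]
    apply lintegral_congr
    intro u
    by_cases h : F u < y
    · simp [hg, Set.indicator, h]
    · simp [hg, Set.indicator, h]
  have hJle : ∀ y : ℝ, J y ≤ ENNReal.ofReal (min y M) := by
    intro y
    by_cases hy : y ≤ 0
    · have : ∀ u ∈ Ioc s t, ({u : ℝ | F u < y}).indicator
          (fun u => ENNReal.ofReal (f u)) u = 0 := by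
        intro u hu
        have : ¬ F u < y := not_lt.2 (hy.trans (hF0 u hu.1.le))
        simp [Set.indicator, this]
      have : J y = 0 := by
        simp only [hJ]
        rw [setLIntegral_congr_fun measurableSet_Ioc this]
        simp
      simp [this]
    · push_neg at hy
      set B : Set ℝ := insert s {u ∈ Ioc s t | F u < y} with hB
      have hBne : B.Nonempty := ⟨s, mem_insert _ _⟩
      have hBbdd : BddAbove B := by
        refine ⟨t, ?_⟩
        rintro u (rfl | ⟨hu1, _⟩)
        · exact hst
        · exact hu1.2
      set c : ℝ := sSup B with hc
      have hsc : s ≤ c := le_csSup hBbdd (mem_insert _ _)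
      have hFcy : F c ≤ y := by
        have : F c = sSup (F '' B) :=
          hFmono.map_csSup_of_continuousAt (hFc.continuousAt) hBne hBbdd
        rw [this]
        apply csSup_le (hBne.image F)
        rintro z ⟨u, (rfl | ⟨_, hu2⟩), rfl⟩
        · rw [hFs]; exact hy.le
        · exact hu2.le
      have hsub : {u : ℝ | F u < y} ∩ Ioc s t ⊆ Ioc s c := by
        rintro u ⟨hu1, hu2⟩
        exact ⟨hu2.1, le_csSup hBbdd (mem_insert_of_mem _ ⟨hu2, hu1⟩)⟩
      calc J y = ∫⁻ u in {u : ℝ | F u < y} ∩ Ioc s t, ENNReal.ofReal (f u) := by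
              simp only [hJ]
              rw [lintegral_indicator (measurableSet_lt hFc.measurable measurable_const),
                Measure.restrict_restrict (measurableSet_lt hFc.measurable measurable_const)]
        _ ≤ ∫⁻ u in Ioc s c, ENNReal.ofReal (f u) := lintegral_mono_set hsub
        _ = ENNReal.ofReal (F c) := hlint c hsc
        _ ≤ ENNReal.ofReal (min y M) :=
            ENNReal.ofReal_le_ofReal (le_min hFcy (hFmono (csSup_le hBne (by
              rintro u (rfl | ⟨hu1, _⟩); exacts [hst, hu1.2]))))
  -- outer bound
  calc ∫⁻ y, ∫⁻ u in Ioc s t, g u y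
      = ∫⁻ y, ENNReal.ofReal (Real.exp (-y)) * J y := by
        apply lintegral_congr; intro y; exact hg2 y
    _ ≤ ∫⁻ y, ENNReal.ofReal (Real.exp (-y) * min y M) := by
        apply lintegral_mono
        intro y
        show ENNReal.ofReal (Real.exp (-y)) * J y
            ≤ ENNReal.ofReal (Real.exp (-y) * min y M)
        rw [ENNReal.ofReal_mul (Real.exp_nonneg _)]
        exact mul_le_mul_right (hJle y) _
    _ ≤ ENNReal.ofReal (1 - Real.exp (-M)) := by
        set φ : ℝ → ℝ := fun y => Real.exp (-y) * min y M with hφ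
        have hφc : Continuous φ :=
          (Real.continuous_exp.comp continuous_neg).mul (continuous_id.min continuous_const)
        have hφint : IntegrableOn φ (Ioi 0) := by
          refine Integrable.mono' ((hexpInt 0).const_mul M) hφc.aestronglyMeasurable ?_
          filter_upwards [ae_restrict_mem measurableSet_Ioi] with y hy
          have h1 : 0 ≤ min y M := le_min (le_of_lt hy) hM0
          rw [Real.norm_eq_abs, abs_of_nonneg (mul_nonneg (Real.exp_nonneg _) h1)]
          calc Real.exp (-y) * min y M ≤ Real.exp (-y) * M :=
                mul_le_mul_of_nonneg_left (min_le_right _ _) (Real.exp_nonneg _)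
            _ = M * Real.exp (-y) := mul_comm _ _
        have hIic : ∫⁻ y in Iic 0, ENNReal.ofReal (φ y) = 0 := by
          rw [setLIntegral_congr_fun measurableSet_Iic
            (fun y (hy : y ∈ Iic 0) => ?_), lintegral_zero]
          have : min y M ≤ 0 := le_trans (min_le_left _ _) hy
          rw [ENNReal.ofReal_eq_zero]
          exact mul_nonpos_of_nonneg_of_nonpos (Real.exp_nonneg _) this
        have hreal : ∫ y in Ioi 0, φ y = 1 - Real.exp (-M) := by
          have hU : Ioc 0 M ∪ Ioi M = Ioi (0:ℝ) := Ioc_union_Ioi_eq_Ioi hM0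
          rw [← hU, setIntegral_union (Ioc_disjoint_Ioi le_rfl) measurableSet_Ioi
            (hφint.mono_set (hU ▸ subset_union_left))
            (hφint.mono_set (hU ▸ subset_union_right))]
          have h1 : ∫ y in Ioc 0 M, φ y = 1 - (1 + M) * Real.exp (-M) := by
            rw [show (∫ y in Ioc 0 M, φ y) = ∫ y in Ioc 0 M, Real.exp (-y) * y from
              setIntegral_congr_fun measurableSet_Ioc
                (fun y (hy : y ∈ Ioc 0 M) => by simp [hφ, min_eq_left hy.2])]
            rw [← intervalIntegral.integral_of_le hM0]
            have hD : ∀ y ∈ uIcc (0:ℝ) M,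
                HasDerivAt (fun y => -(1+y) * Real.exp (-y)) (Real.exp (-y) * y) y := by
              intro y _
              have h1 : HasDerivAt (fun y : ℝ => -(1+y)) (-1) y := by
                exact ((hasDerivAt_id y).const_add 1).neg
              have h2 : HasDerivAt (fun y : ℝ => Real.exp (-y)) (-Real.exp (-y)) y := by
                exact (hasDerivAt_neg y).exp.congr_deriv (by ring)
              have := h1.mul h2
              exact this.congr_deriv (by ring)
            rw [intervalIntegral.integral_eq_sub_of_hasDerivAt hD
              ((by fun_prop : Continuous fun y : ℝ => Real.exp (-y) * y).intervalIntegrable 0 M)]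
            simp [Real.exp_zero]
            ring
          have h2 : ∫ y in Ioi M, φ y = Real.exp (-M) * M := by
            rw [show (∫ y in Ioi M, φ y) = ∫ y in Ioi M, Real.exp (-y) * M from
              setIntegral_congr_fun measurableSet_Ioi
                (fun y (hy : y ∈ Ioi M) => by simp [hφ, min_eq_right (le_of_lt (mem_Ioi.mp hy))])]
            rw [integral_mul_const, integral_exp_neg_Ioi]
          rw [h1, h2]
          ring
        calc ∫⁻ y, ENNReal.ofReal (φ y)
            = (∫⁻ y in Iic 0, ENNReal.ofReal (φ y)) + ∫⁻ y in (Iic 0)ᶜ, ENNReal.ofReal (φ y) :=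
              (lintegral_add_compl _ measurableSet_Iic).symm
          _ = ∫⁻ y in Ioi 0, ENNReal.ofReal (φ y) := by
              rw [hIic, compl_Iic, zero_add]
          _ = ENNReal.ofReal (∫ y in Ioi 0, φ y) := by
              rw [← ofReal_integral_eq_lintegral_ofReal hφint ?_]
              filter_upwards [ae_restrict_mem measurableSet_Ioi] with y hy
              exact mul_nonneg (Real.exp_nonneg _) (le_min (le_of_lt hy) hM0)
          _ = ENNReal.ofReal (1 - Real.exp (-M)) := by rw [hreal]
          _ ≤ ENNReal.ofReal (1 - Real.exp (-M)) := le_rfl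


/-- The Feller construction for a (possibly nonhomogeneous) conservative stable Q-function:
`qt u x` is the off-diagonal jump measure `q̃(dz|x,u)`, `qx u x = q_x(u)`, and
`p^{(0)}(s,x,t,Γ) = δ_x(Γ) e^{-∫_s^t q_x(v)dv}`,
`p^{(n+1)}(s,x,t,Γ) = ∫_s^t e^{-∫_s^u q_x(v)dv} ∫_S p^{(n)}(u,z,t,Γ) q̃(dz|x,u) du`. -/
noncomputable def feller {S : Type*} [MeasurableSpace S]
    (qt : ℝ → S → Measure S) (qx : ℝ → S → ℝ) :
    ℕ → ℝ → S → ℝ → Set S → ℝ≥0∞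
  | 0 => fun s x t Γ =>
      Measure.dirac x Γ * ENNReal.ofReal (Real.exp (-(∫ v in s..t, qx v x)))
  | (n+1) => fun s x t Γ =>
      ∫⁻ u in Set.Ioc s t,
        ENNReal.ofReal (Real.exp (-(∫ v in s..u, qx v x)))
          * ∫⁻ z, feller qt qx n u z t Γ ∂ qt u x

/-- each term of the Feller construction is nonnegative, the partial sums of
the total masses are at most 1, and hence `p_q(s,x,t,S) = Σ_n p^{(n)}(s,x,t,S) ≤ 1`. -/
theorem stmt7 {S : Type*} [MeasurableSpace S]
    (qt : ℝ → S → Measure S) (qx : ℝ → S → ℝ)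
    (hq0 : ∀ u x, 0 ≤ qx u x)
    (hcons : ∀ u x, qt u x Set.univ = ENNReal.ofReal (qx u x))
    (hdiag : ∀ u x, qt u x {x} = 0)
    (hstable : ∀ x, ∃ C : ℝ, ∀ u, qx u x ≤ C)
    (hmeas : ∀ x, Measurable fun u => qx u x) :
    ∀ (n : ℕ) (s t : ℝ) (x : S) (Γ : Set S), s ≤ t →
      (0 ≤ feller qt qx n s x t Γ) ∧
      (∑ k ∈ Finset.range (n + 1), feller qt qx k s x t Set.univ) ≤ 1 ∧
      (∑' k : ℕ, feller qt qx k s x t Set.univ) ≤ 1 := by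
  have hexp1 : ∀ s t : ℝ, ∀ x : S, s ≤ t → Real.exp (-(∫ v in s..t, qx v x)) ≤ 1 := by
    intro s t x hst
    have h0 : 0 ≤ ∫ v in s..t, qx v x :=
      intervalIntegral.integral_nonneg hst fun u _ => hq0 u x
    calc Real.exp (-(∫ v in s..t, qx v x)) ≤ Real.exp 0 :=
          Real.exp_le_exp.2 (neg_nonpos.2 h0)
      _ = 1 := Real.exp_zero
  have main : ∀ (t : ℝ) (n : ℕ), ∀ s (x : S), s ≤ t →
      ∑ k ∈ Finset.range (n + 1), feller qt qx k s x t Set.univ ≤ 1 := by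
    intro t n
    induction n with
    | zero =>
      intro s x hst
      rw [show (0:ℕ)+1 = 1 from rfl, Finset.sum_range_one]
      show Measure.dirac x Set.univ * ENNReal.ofReal (Real.exp (-(∫ v in s..t, qx v x))) ≤ 1
      rw [measure_univ, one_mul]
      calc ENNReal.ofReal (Real.exp (-(∫ v in s..t, qx v x)))
          ≤ ENNReal.ofReal 1 := ENNReal.ofReal_le_ofReal (hexp1 s t x hst)
        _ = 1 := ENNReal.ofReal_one
    | succ n ih =>
      intro s x hst
      rw [Finset.sum_range_succ']
      have h1 : ∑ k ∈ Finset.range (n + 1), feller qt qx (k + 1) s x t Set.univ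
          ≤ ENNReal.ofReal (1 - Real.exp (-(∫ v in s..t, qx v x))) := by
        obtain ⟨C, hC⟩ := hstable x
        calc ∑ k ∈ Finset.range (n + 1), feller qt qx (k + 1) s x t Set.univ
            = ∑ k ∈ Finset.range (n + 1), ∫⁻ u in Set.Ioc s t,
                ENNReal.ofReal (Real.exp (-(∫ v in s..u, qx v x)))
                  * ∫⁻ z, feller qt qx k u z t Set.univ ∂ qt u x := rfl
          _ ≤ ∫⁻ u in Set.Ioc s t, ∑ k ∈ Finset.range (n + 1),
                ENNReal.ofReal (Real.exp (-(∫ v in s..u, qx v x)))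
                  * ∫⁻ z, feller qt qx k u z t Set.univ ∂ qt u x :=
              sum_lintegral_le' _ _ _
          _ ≤ ∫⁻ u in Set.Ioc s t,
                ENNReal.ofReal (Real.exp (-(∫ v in s..u, qx v x)))
                  * ENNReal.ofReal (qx u x) := by
              apply lintegral_mono_ae
              filter_upwards [ae_restrict_mem measurableSet_Ioc] with u hu
              rw [← Finset.mul_sum]
              apply mul_le_mul_right
              calc ∑ k ∈ Finset.range (n + 1), ∫⁻ z, feller qt qx k u z t Set.univ ∂ qt u x
                  ≤ ∫⁻ z, ∑ k ∈ Finset.range (n + 1), feller qt qx k u z t Set.univ ∂ qt u x :=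
                    sum_lintegral_le' _ _ _
                _ ≤ ∫⁻ _z, 1 ∂ qt u x := lintegral_mono fun z => ih u z hu.2
                _ = qt u x Set.univ := by simp
                _ = ENNReal.ofReal (qx u x) := hcons u x
          _ ≤ ENNReal.ofReal (1 - Real.exp (-(∫ v in s..t, qx v x))) :=
              key_ineq (fun u => hq0 u x) hC (hmeas x) hst
      have h0 : feller qt qx 0 s x t Set.univ
          = ENNReal.ofReal (Real.exp (-(∫ v in s..t, qx v x))) := by
        show Measure.dirac x Set.univ * _ = _
        rw [measure_univ, one_mul]
      calc (∑ k ∈ Finset.range (n + 1), feller qt qx (k + 1) s x t Set.univ)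
            + feller qt qx 0 s x t Set.univ
          ≤ ENNReal.ofReal (1 - Real.exp (-(∫ v in s..t, qx v x)))
            + ENNReal.ofReal (Real.exp (-(∫ v in s..t, qx v x))) := add_le_add h1 (le_of_eq h0)
        _ = ENNReal.ofReal 1 := by
            rw [← ENNReal.ofReal_add (by linarith [hexp1 s t x hst]) (Real.exp_nonneg _)]
            ring_nf
        _ = 1 := ENNReal.ofReal_one
  intro n s t x Γ hst
  refine ⟨zero_le, main t n s x hst, ?_⟩
  rw [ENNReal.tsum_eq_iSup_nat]
  apply iSup_le
  intro i
  cases i with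
  | zero => exact (Finset.sum_range_zero _).le.trans zero_le_one
  | succ i => exact main t i s x hst
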